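/- For k ≥ 3, the polynomial χ(r) = r^{k−1} − r^{k−2} − ⋯ − r − 1 is the unique monic integer polynomial of degree k−1 having the largest real root of χ as a root. -/

import Mathlib

open Polynomial

/-- χ(r) = r^{k−1} − (r^{k−2} + ⋯ + r + 1) as a monic integer polynomial. -/
noncomputable def chi4 (k : ℕ) : Polynomial ℤ :=
  X ^ (k - 1) - ∑ i ∈ Finset.range (k - 1), X ^ i

/- ### Auxiliary lemmas -/

lemma key_id4 {R : Type*} [CommRing R] (x : R) (n : ℕ)
    (h : x ^ n = ∑ i ∈ Finset.range n, x ^ i) :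
    x ^ (n + 1) - 2 * x ^ n + 1 = 0 := by
  linear_combination (x - 1) * h + geom_sum_mul x n

lemma crit_eq4 (n : ℕ) (hn : 1 ≤ n) (c : ℝ) (hc : 0 < c)
    (h : ((n : ℝ) + 1) * c ^ n - 2 * n * c ^ (n - 1) = 0) :
    c = 2 * n / ((n : ℝ) + 1) := by
  have hpow : c ^ n = c ^ (n - 1) * c := by
    rw [← pow_succ]; congr 1; omega
  have h2 : (((n : ℝ) + 1) * c - 2 * n) * c ^ (n - 1) = 0 := by
    rw [hpow] at h; linear_combination h
  rcases mul_eq_zero.mp h2 with h3 | h3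
  · have hn1 : ((n : ℝ) + 1) ≠ 0 := by positivity
    field_simp
    linarith
  · exact absurd h3 (pow_ne_zero _ hc.ne')

lemma F_hasDeriv4 (n : ℕ) (x : ℝ) :
    HasDerivAt (fun t : ℝ => t ^ (n + 1) - 2 * t ^ n + 1)
      (((n : ℝ) + 1) * x ^ n - 2 * (n * x ^ (n - 1))) x := by
  have h1 := hasDerivAt_pow (n + 1) x
  have h2 := (hasDerivAt_pow n x).const_mul (2 : ℝ)
  have h3 := (h1.sub h2).add_const 1
  refine h3.congr_deriv ?_
  push_cast [Nat.add_sub_cancel]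
  ring

lemma crit_mem4 (n : ℕ) (hn : 2 ≤ n) {a b : ℝ} (ha : 1 ≤ a) (hab : a < b)
    (hFa : a ^ (n + 1) - 2 * a ^ n + 1 = 0) (hFb : b ^ (n + 1) - 2 * b ^ n + 1 = 0) :
    a < 2 * n / ((n : ℝ) + 1) ∧ 2 * n / ((n : ℝ) + 1) < b := by
  obtain ⟨c, hc, hc0⟩ := exists_hasDerivAt_eq_zero hab
    (Continuous.continuousOn (by continuity)) (by rw [hFa, hFb])
    (fun x _ => F_hasDeriv4 n x)
  have hcpos : 0 < c := lt_of_le_of_lt (le_trans zero_le_one ha) hc.1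
  have hcrit := crit_eq4 n (by omega) c hcpos (by linarith [hc0])
  constructor
  · exact hcrit ▸ hc.1
  · exact hcrit ▸ hc.2

lemma real_uniq_root4 (n : ℕ) (hn : 2 ≤ n) {α b : ℝ} (hb : 1 < b) (hbα : b ≤ α)
    (hFα : α ^ (n + 1) - 2 * α ^ n + 1 = 0) (hFb : b ^ (n + 1) - 2 * b ^ n + 1 = 0) :
    b = α := by
  rcases eq_or_lt_of_le hbα with h | h
  · exact h
  · have hF1 : (1 : ℝ) ^ (n + 1) - 2 * 1 ^ n + 1 = 0 := by norm_num
    have h1 := crit_mem4 n hn le_rfl hb hF1 hFb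
    have h2 := crit_mem4 n hn hb.le h hFb hFα
    linarith [h1.2, h2.1]

lemma alpha_not_crit4 (n : ℕ) (hn : 2 ≤ n) {α : ℝ} (hα : 1 < α)
    (hFα : α ^ (n + 1) - 2 * α ^ n + 1 = 0)
    (hF'α : ((n : ℝ) + 1) * α ^ n - 2 * n * α ^ (n - 1) = 0) : False := by
  have hcrit := crit_eq4 n (by omega) α (by linarith) hF'α
  have hF1 : (1 : ℝ) ^ (n + 1) - 2 * 1 ^ n + 1 = 0 := by norm_num
  have hmem := crit_mem4 n hn le_rfl hα hF1 hFα
  rw [← hcrit] at hmem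
  exact absurd hmem.2 (lt_irrefl α)

lemma complex_root_eq4 (n : ℕ) (hn : 2 ≤ n) (α : ℝ)
    (huniq : ∀ b : ℝ, 1 < b → b ^ n = ∑ i ∈ Finset.range n, b ^ i → b = α)
    (β : ℂ) (hβ : β ^ n = ∑ i ∈ Finset.range n, β ^ i) (habs : 1 ≤ ‖β‖) :
    β = (α : ℂ) := by
  set t := ‖β‖ with ht
  have ht0 : (0:ℝ) < t := lt_of_lt_of_le one_pos habs
  have key : β ^ n * (2 - β) = 1 := by linear_combination -(key_id4 β n hβ)
  have habsw : t ^ n * ‖2 - β‖ = 1 := by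
    have h := congrArg norm key
    simpa [norm_mul, norm_pow] using h
  have htn : (0:ℝ) < t ^ n := by positivity
  have h1 : t ^ n ≤ ∑ i ∈ Finset.range n, t ^ i := by
    calc t ^ n = ‖β ^ n‖ := by rw [norm_pow]
    _ = ‖∑ i ∈ Finset.range n, β ^ i‖ := by rw [hβ]
    _ ≤ ∑ i ∈ Finset.range n, ‖β ^ i‖ := norm_sum_le _ _
    _ = ∑ i ∈ Finset.range n, t ^ i := by simp [norm_pow, ht]
  have hgs : (∑ i ∈ Finset.range n, t ^ i) * (t - 1) = t ^ n - 1 := geom_sum_mul t n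
  have hps : t ^ (n+1) = t ^ n * t := pow_succ t n
  have ineq2 : t ^ (n+1) + 1 ≤ 2 * t ^ n := by
    have h2 : t ^ n * (t - 1) ≤ (∑ i ∈ Finset.range n, t ^ i) * (t - 1) :=
      mul_le_mul_of_nonneg_right h1 (by linarith)
    nlinarith [h2, hgs]
  have ineq1 : 2 * t ^ n ≤ t ^ (n+1) + 1 := by
    have h3 : (2:ℝ) ≤ t + ‖2 - β‖ := by
      have h4 : ‖β + (2 - β)‖ ≤ ‖β‖ + ‖2 - β‖ :=
        norm_add_le _ _
      simpa using h4
    nlinarith [mul_le_mul_of_nonneg_left h3 htn.le, habsw]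
  have heqt : t ^ (n+1) + 1 = 2 * t ^ n := le_antisymm ineq2 ineq1
  have hw : ‖2 - β‖ = 2 - t := by
    have h5 : t ^ n * (2 - t) = 1 := by nlinarith [heqt]
    nlinarith [habsw, h5, htn]
  have hnormadd : ‖β + (2 - β)‖ = ‖β‖ + ‖(2:ℂ) - β‖ := by
    rw [hw, ← ht]
    norm_num
  have hray : SameRay ℝ β (2 - β) := sameRay_iff_norm_add.mpr hnormadd
  have habs' : (1:ℝ) ≤ ‖β‖ := habs
  have hβ0 : β ≠ 0 := by
    intro h; rw [h] at habs'; simp at habs'; linarith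
  have hw0 : (2:ℂ) - β ≠ 0 := by
    intro h; rw [h] at habsw; simp at habsw
  obtain ⟨r, hr, hrβ⟩ := hray.exists_pos_left hβ0 hw0
  have hβval : β * ((r:ℂ) + 1) = 2 := by
    have h6 : (r:ℂ) * β = 2 - β := by rw [← hrβ]; simp [Complex.real_smul]
    linear_combination h6
  set b : ℝ := 2 / (r + 1) with hb
  have hr1 : (r:ℝ) + 1 ≠ 0 := by positivity
  have hβb : β = (b : ℂ) := by
    rw [hb]
    push_cast
    rw [eq_div_iff (by exact_mod_cast hr1)]
    linear_combination hβval
  have hbreal : b ^ n = ∑ i ∈ Finset.range n, b ^ i := by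
    have h7 := hβ
    rw [hβb] at h7
    exact_mod_cast h7
  have hbpos : 0 < b := by positivity
  have hb1 : 1 ≤ b := by
    have h8 : ‖((b:ℂ))‖ = |b| := Complex.norm_real b
    rw [hβb] at habs'
    rw [h8, abs_of_pos hbpos] at habs'
    exact habs'
  have hbne1 : b ≠ 1 := by
    intro h
    rw [h] at hbreal
    simp at hbreal
    have h9 : (n:ℝ) = 1 := by linarith
    have : n = 1 := by exact_mod_cast h9
    omega
  have hfin := huniq b (lt_of_le_of_ne hb1 (Ne.symm hbne1)) hbreal
  rw [hβb, hfin]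

lemma multiset_prod_aux4 (s : Multiset ℝ) (h : ∀ x ∈ s, 0 ≤ x ∧ x < 1) :
    0 ≤ s.prod ∧ s.prod ≤ 1 ∧ (s ≠ 0 → s.prod < 1) := by
  induction s using Multiset.induction_on with
  | empty => simp
  | cons a s ih =>
    have ha := h a (Multiset.mem_cons_self a s)
    obtain ⟨ih1, ih2, _⟩ := ih (fun x hx => h x (Multiset.mem_cons_of_mem hx))
    rw [Multiset.prod_cons]
    refine ⟨mul_nonneg ha.1 ih1, ?_, fun _ => ?_⟩ <;> nlinarith [ha.1, ha.2]

lemma chi4_aeval {R : Type*} [CommRing R] (k : ℕ) (x : R) :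
    aeval x (chi4 k) = x ^ (k - 1) - ∑ i ∈ Finset.range (k - 1), x ^ i := by
  simp [chi4]

lemma chi4_sum_degree_lt (k : ℕ) (hk : 1 ≤ k - 1) :
    (∑ i ∈ Finset.range (k - 1), (X : Polynomial ℤ) ^ i).degree < ((k - 1 : ℕ) : WithBot ℕ) := by
  apply lt_of_le_of_lt (degree_sum_le _ _)
  rw [Finset.sup_lt_iff (by exact_mod_cast WithBot.bot_lt_coe (k - 1))]
  intro i hi
  rw [degree_X_pow]
  exact_mod_cast Finset.mem_range.mp hi

lemma chi4_monic (k : ℕ) (hk : 1 ≤ k - 1) : (chi4 k).Monic := by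
  apply (monic_X_pow _).sub_of_left
  rw [degree_X_pow]
  exact chi4_sum_degree_lt k hk

lemma chi4_natDegree (k : ℕ) (hk : 1 ≤ k - 1) : (chi4 k).natDegree = k - 1 := by
  have hdeg : (chi4 k).degree = ((k - 1 : ℕ) : WithBot ℕ) := by
    rw [chi4, degree_sub_eq_left_of_degree_lt, degree_X_pow]
    rw [degree_X_pow]
    exact chi4_sum_degree_lt k hk
  exact natDegree_eq_of_degree_eq_some hdeg

lemma chi4_coeff_zero (k : ℕ) (hk : 1 ≤ k - 1) : (chi4 k).coeff 0 = -1 := by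
  rw [coeff_zero_eq_eval_zero]
  have h0 : (0:ℤ) ^ (k - 1) = 0 := zero_pow (by omega)
  simp [chi4, eval_finset_sum, h0, zero_pow_eq]
  omega

/-- For k ≥ 3, χ is the unique monic integer polynomial of degree k−1 having the largest
real root α of χ as a root. -/
theorem stmt4 (k : ℕ) (hk : 3 ≤ k) (α : ℝ) (hα : 1 < α)
    (hroot : Polynomial.aeval α (chi4 k) = 0)
    (hmax : ∀ β : ℝ, Polynomial.aeval β (chi4 k) = 0 → β ≤ α) :
    ∀ f : Polynomial ℤ, f.Monic → f.natDegree = k - 1 →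
      Polynomial.aeval α f = 0 → f = chi4 k := by
  intro f hf hdf hfα
  have hn : 2 ≤ k - 1 := by omega
  have chiM : (chi4 k).Monic := chi4_monic k (by omega)
  have chiND : (chi4 k).natDegree = k - 1 := chi4_natDegree k (by omega)
  have hαeq : α ^ (k - 1) = ∑ i ∈ Finset.range (k - 1), α ^ i := by
    have h := hroot
    rw [chi4_aeval, sub_eq_zero] at h
    exact h
  have hint : IsIntegral ℤ α := ⟨chi4 k, chiM, by simpa [aeval_def] using hroot⟩
  set m := minpoly ℤ α with hm_def
  have hmM : m.Monic := minpoly.monic hint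
  obtain ⟨g, hchi_eq⟩ : m ∣ chi4 k := minpoly.isIntegrallyClosed_dvd hint hroot
  have hgM : g.Monic := hmM.of_mul_monic_left (hchi_eq ▸ chiM)
  -- uniqueness of real roots > 1
  have huniq : ∀ b : ℝ, 1 < b → b ^ (k - 1) = ∑ i ∈ Finset.range (k - 1), b ^ i → b = α := by
    intro b hb hbeq
    have hbroot : aeval b (chi4 k) = 0 := by rw [chi4_aeval, hbeq, sub_self]
    exact real_uniq_root4 (k - 1) hn hb (hmax b hbroot) (key_id4 α _ hαeq) (key_id4 b _ hbeq)
  have hg1 : g = 1 := by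
    by_contra hgne
    have hgd : 0 < g.natDegree := by
      rcases Nat.eq_zero_or_pos g.natDegree with h0 | h
      · exact absurd (hgM.natDegree_eq_zero.mp h0) hgne
      · exact h
    set gC := g.map (algebraMap ℤ ℂ) with hgC
    have hgCmonic : gC.Monic := hgM.map (algebraMap ℤ ℂ)
    have hsplit : gC.Splits := IsAlgClosed.splits gC
    have hcard : gC.roots.card = g.natDegree := by
      have h1 := hsplit.natDegree_eq_card_roots
      rw [← h1, hgC]
      exact hgM.natDegree_map (algebraMap ℤ ℂ)
    have hRne : gC.roots ≠ 0 := by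
      intro h0
      rw [h0] at hcard
      simp at hcard
      omega
    have hrootchi : ∀ r ∈ gC.roots, r ^ (k - 1) = ∑ i ∈ Finset.range (k - 1), r ^ i := by
      intro r hr
      have hgr : aeval r g = 0 := by
        have h := isRoot_of_mem_roots hr
        rwa [hgC, IsRoot, eval_map, ← aeval_def] at h
      have hchir : aeval r (chi4 k) = 0 := by
        rw [hchi_eq, map_mul, hgr, mul_zero]
      rw [chi4_aeval, sub_eq_zero] at hchir
      exact hchir
    by_cases hex : ∃ r ∈ gC.roots, r = ((α : ℝ) : ℂ)
    · -- α is a double root of chi: derivative contradiction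
      obtain ⟨r, hrmem, hrα⟩ := hex
      have hgα : aeval α g = 0 := by
        have h1 : eval ((α : ℝ) : ℂ) gC = 0 := by
          have h := isRoot_of_mem_roots hrmem
          rwa [hrα] at h
        rw [hgC, eval_map] at h1
        have h2 : Complex.ofRealHom (eval₂ (algebraMap ℤ ℝ) α g) =
            eval₂ (Complex.ofRealHom.comp (algebraMap ℤ ℝ)) ((α : ℝ) : ℂ) g :=
          Polynomial.hom_eval₂ g (algebraMap ℤ ℝ) Complex.ofRealHom α
        have h3 : Complex.ofRealHom.comp (algebraMap ℤ ℝ) = algebraMap ℤ ℂ := by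
          ext1
          simp
        rw [h3, h1] at h2
        have h4 : eval₂ (algebraMap ℤ ℝ) α g = 0 := Complex.ofReal_eq_zero.mp h2
        rwa [aeval_def]
      have hmα : aeval α m = 0 := minpoly.aeval ℤ α
      have hevalm : eval α (m.map (algebraMap ℤ ℝ)) = 0 := by rwa [eval_map, ← aeval_def]
      have hevalg : eval α (g.map (algebraMap ℤ ℝ)) = 0 := by rwa [eval_map, ← aeval_def]
      have hevchi : eval α ((chi4 k).map (algebraMap ℤ ℝ)) = 0 := by rw [eval_map, ← aeval_def]; exact hroot
      have hdchi : eval α (derivative ((chi4 k).map (algebraMap ℤ ℝ))) = 0 := by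
        rw [hchi_eq, Polynomial.map_mul, derivative_mul, eval_add, eval_mul, eval_mul,
          hevalm, hevalg]
        ring
      have hPR : ((X : Polynomial ℝ) - 1) * ((chi4 k).map (algebraMap ℤ ℝ)) =
          X ^ (k - 1 + 1) - 2 * X ^ (k - 1) + 1 := by
        have hmapchi : (chi4 k).map (algebraMap ℤ ℝ) =
            X ^ (k - 1) - ∑ i ∈ Finset.range (k - 1), (X : Polynomial ℝ) ^ i := by
          simp [chi4, Polynomial.map_sub, Polynomial.map_pow, Polynomial.map_sum]
        rw [hmapchi]
        linear_combination -(geom_sum_mul (X : Polynomial ℝ) (k - 1))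
      have hderivP : eval α (derivative (((X : Polynomial ℝ) - 1) * ((chi4 k).map (algebraMap ℤ ℝ)))) = 0 := by
        rw [derivative_mul, eval_add, eval_mul, eval_mul, hevchi, hdchi]
        ring
      rw [hPR] at hderivP
      have hcompute : eval α (derivative ((X : Polynomial ℝ) ^ (k - 1 + 1)
          - 2 * X ^ (k - 1) + 1)) =
          (((k - 1 : ℕ) : ℝ) + 1) * α ^ (k - 1) - 2 * ((k - 1 : ℕ) : ℝ) * α ^ (k - 1 - 1) := by
        simp [derivative_X_pow, Nat.add_sub_cancel]
        push_cast
        ring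
      rw [hcompute] at hderivP
      exact alpha_not_crit4 (k - 1) hn hα (key_id4 α _ hαeq) hderivP
    · -- all roots of g have modulus < 1, contradicting |g(0)| = 1
      push_neg at hex
      have hsmall : ∀ r ∈ gC.roots, ‖r‖ < 1 := by
        intro r hr
        by_contra hge
        push_neg at hge
        exact hex r hr (complex_root_eq4 (k - 1) hn α huniq r (hrootchi r hr) hge)
      have hchicoeff : (chi4 k).coeff 0 = -1 := chi4_coeff_zero k (by omega)
      rw [hchi_eq, mul_coeff_zero] at hchicoeff
      have hgunit : IsUnit (g.coeff 0) :=
        IsUnit.of_mul_eq_one (-(m.coeff 0)) (by linear_combination -hchicoeff)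
      have hg0 : g.coeff 0 = 1 ∨ g.coeff 0 = -1 := Int.isUnit_iff.mp hgunit
      have hprodfact := hsplit.eq_prod_roots_of_monic hgCmonic
      have hev0 : gC.eval 0 = (gC.roots.map (fun a => -a)).prod := by
        conv_lhs => rw [hprodfact]
        rw [eval_multiset_prod, Multiset.map_map]
        congr 1
        apply Multiset.map_congr rfl
        intro a _
        simp
      have hgc0 : gC.eval 0 = ((g.coeff 0 : ℤ) : ℂ) := by
        rw [← coeff_zero_eq_eval_zero, hgC, coeff_map]
        simp
      have habsprod : (gC.roots.map (fun a => ‖a‖)).prod = 1 := by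
        have h5 := congrArg norm hev0
        rw [hgc0] at h5
        have h6 : ‖((g.coeff 0 : ℤ) : ℂ)‖ = 1 := by
          rcases hg0 with h | h <;> simp [h]
        rw [h6] at h5
        rw [show ‖(gC.roots.map (fun a => -a)).prod‖ = ((gC.roots.map (fun a => -a)).map (fun a => ‖a‖)).prod from map_multiset_prod (normHom : ℂ →*₀ ℝ) _, Multiset.map_map] at h5
        have h7 : Multiset.map ((fun a : ℂ => ‖a‖) ∘ fun a => -a) gC.roots =
            Multiset.map (fun a => ‖a‖) gC.roots := by
          apply Multiset.map_congr rfl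
          intro a _
          simp
        rw [h7] at h5
        exact h5.symm
      have hlt := (multiset_prod_aux4 (gC.roots.map (fun a => ‖a‖)) ?hmem).2.2 ?hne
      · rw [habsprod] at hlt
        exact absurd hlt (lt_irrefl 1)
      case hmem =>
        intro x hx
        obtain ⟨a, ha, rfl⟩ := Multiset.mem_map.mp hx
        exact ⟨norm_nonneg _, hsmall a ha⟩
      case hne =>
        simpa using hRne
  -- conclude
  have hm_eq : m = chi4 k := by
    rw [hg1, mul_one] at hchi_eq
    exact hchi_eq.symm
  obtain ⟨h, hf_eq⟩ : m ∣ f := minpoly.isIntegrallyClosed_dvd hint hfα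
  have hhM : h.Monic := hmM.of_mul_monic_left (hf_eq ▸ hf)
  have hdeg2 : (k - 1) = (k - 1) + h.natDegree := by
    calc (k - 1) = f.natDegree := hdf.symm
    _ = m.natDegree + h.natDegree := by rw [hf_eq, hmM.natDegree_mul hhM]
    _ = (k - 1) + h.natDegree := by rw [hm_eq, chiND]
  have hh0 : h.natDegree = 0 := by omega
  have hh1 : h = 1 := hhM.natDegree_eq_zero.mp hh0
  rw [hf_eq, hh1, mul_one, hm_eq]
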